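/- Let u : ℝ² → ℝ be three times continuously differentiable, let x₁, x₂ ∈ ℝ², let m = (x₁ + x₂)/2, and suppose K ≥ 0 bounds the third derivative of u on the segment [x₁, x₂], i.e., |D³u(q)[e,e,e]| ≤ K·|e|³ for all q ∈ [x₁,x₂] and e ∈ ℝ². Then |𝐧(∇u(m)) · (x₂ − x₁, u(x₂) − u(x₁))| ≤ (K/24)·|x₂ − x₁|³. -/

import Mathlib

open scoped RealInnerProductSpace

open Set

noncomputable section

/-- Euclidean plane and 3-space. -/
abbrev E2 := EuclideanSpace ℝ (Fin 2)
abbrev E3 := EuclideanSpace ℝ (Fin 3)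

/-- The vector `(v, t) ∈ ℝ³` with first two components `v ∈ ℝ²` and last
component `t ∈ ℝ`. -/
def toR3 (v : E2) (t : ℝ) : E3 :=
  (WithLp.equiv 2 (Fin 3 → ℝ)).symm ![v 0, v 1, t]

/-- The upward unit normal `𝐧(p) = (−p, 1)/√(1+|p|²)` of a graph with
gradient `p`. -/
def gauss (p : E2) : E3 := (Real.sqrt (1 + ‖p‖ ^ 2))⁻¹ • toR3 (-p) 1


def G (f : E2 → ℝ) (a v : E2) (n : ℕ) (t : ℝ) : ℝ :=
  iteratedFDeriv ℝ n f (a + t • v) (fun _ : Fin n => v)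

lemma hasDerivAt_G {f : E2 → ℝ} (hf : ContDiff ℝ 3 f) (a v : E2) {n : ℕ} (hn : n < 3) (t : ℝ) :
    HasDerivAt (G f a v n) (G f a v (n + 1) t) t := by
  have hc : HasDerivAt (fun s : ℝ => a + s • v) v t := by
    simpa using ((hasDerivAt_id t).smul_const v).const_add a
  have hdiff : Differentiable ℝ (iteratedFDeriv ℝ n f) :=
    hf.differentiable_iteratedFDeriv (by exact_mod_cast hn)
  have h1 : HasDerivAt (fun s => iteratedFDeriv ℝ n f (a + s • v))
      (fderiv ℝ (iteratedFDeriv ℝ n f) (a + t • v) v) t :=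
    (hdiff _).hasFDerivAt.comp_hasDerivAt t hc
  have h2 := ((ContinuousMultilinearMap.apply ℝ (fun _ : Fin n => E2) ℝ
      (fun _ => v)).hasFDerivAt.comp_hasDerivAt t h1)
  have h3 : G f a v (n + 1) t =
      fderiv ℝ (iteratedFDeriv ℝ n f) (a + t • v) v (fun _ => v) := by
    rw [G, iteratedFDeriv_succ_apply_left]; rfl
  rw [h3]
  exact h2

lemma G_zero (f : E2 → ℝ) (a v : E2) : G f a v 0 = fun t => f (a + t • v) := by
  funext t; simp [G]

lemma contDiff_G0 {f : E2 → ℝ} (hf : ContDiff ℝ 3 f) (a v : E2) :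
    ContDiff ℝ 3 (G f a v 0) := by
  rw [G_zero]
  exact hf.comp (contDiff_const.add (contDiff_id.smul contDiff_const))

lemma iteratedDerivWithin_G {f : E2 → ℝ} (hf : ContDiff ℝ 3 f) (a v : E2)
    {s : Set ℝ} (hs : UniqueDiffOn ℝ s) {n : ℕ} (hn : n ≤ 3) :
    ∀ t ∈ s, iteratedDerivWithin n (G f a v 0) s t = G f a v n t := by
  induction n with
  | zero => intro t ht; simp
  | succ k ih =>
    intro t ht
    have hk3 : k < 3 := hn
    rw [iteratedDerivWithin_succ,
      derivWithin_congr (fun y hy => ih (le_of_lt hk3) y hy) (ih (le_of_lt hk3) t ht)]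
    exact ((hasDerivAt_G hf a v hk3 t).hasDerivWithinAt).derivWithin (hs t ht)

lemma one_sided {f : E2 → ℝ} (hf : ContDiff ℝ 3 f) (a v : E2) {C : ℝ}
    (hC : ∀ t ∈ Icc (0:ℝ) 1, |G f a v 3 t| ≤ C) :
    |G f a v 0 1 - G f a v 0 0 - G f a v 1 0 - G f a v 2 0 / 2| ≤ C / 6 := by
  have hs : UniqueDiffOn ℝ (Icc (0:ℝ) 1) := uniqueDiffOn_Icc (by norm_num)
  have hg := contDiff_G0 hf a v
  obtain ⟨x', hx', hEq⟩ := by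
    have htl := taylor_mean_remainder_lagrange (f := G f a v 0) (n := 2) (x₀ := 0) (x := 1)
      (show (0:ℝ) ≠ 1 by norm_num)
    rw [uIcc_of_le (by norm_num : (0:ℝ) ≤ 1), uIoo_of_le (by norm_num : (0:ℝ) ≤ 1)] at htl
    exact htl
      ((hg.of_le (by norm_num)).contDiffOn)
      (by
        refine DifferentiableOn.congr
          (f := G f a v 2) (f₁ := iteratedDerivWithin 2 (G f a v 0) (Icc 0 1)) ?_ ?_
        · exact fun t ht => (hasDerivAt_G hf a v (by norm_num) t).differentiableAt.differentiableWithinAt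
        · exact fun t ht => iteratedDerivWithin_G hf a v hs (by norm_num) t (Ioo_subset_Icc_self ht))
  have h0 : (0:ℝ) ∈ Icc (0:ℝ) 1 := by norm_num
  have ht2 : taylorWithinEval (G f a v 0) 2 (Icc 0 1) 0 1
      = G f a v 0 0 + G f a v 1 0 + G f a v 2 0 / 2 := by
    rw [taylorWithinEval_succ, taylorWithinEval_succ, taylor_within_zero_eval,
      iteratedDerivWithin_G hf a v hs (by norm_num) 0 h0,
      iteratedDerivWithin_G hf a v hs (by norm_num) 0 h0]
    norm_num; ring
  rw [ht2] at hEq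
  have h3 : iteratedDerivWithin 3 (G f a v 0) (Icc 0 1) x' = G f a v 3 x' :=
    iteratedDerivWithin_G hf a v hs le_rfl x' (Ioo_subset_Icc_self hx')
  rw [h3] at hEq
  have hb := hC x' (Ioo_subset_Icc_self hx')
  have : G f a v 0 1 - (G f a v 0 0 + G f a v 1 0 + G f a v 2 0 / 2)
      = G f a v 3 x' * (1 - 0) ^ 3 / 6 := by
    rw [hEq]; norm_num [Nat.factorial]
  have h4 : G f a v 0 1 - G f a v 0 0 - G f a v 1 0 - G f a v 2 0 / 2 = G f a v 3 x' / 6 := by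
    rw [sub_sub, sub_sub, ← add_assoc, this]; ring
  rw [h4, abs_div]
  rw [show |(6:ℝ)| = 6 by norm_num]
  linarith [abs_nonneg (G f a v 3 x')]

lemma key_bound (u : E2 → ℝ) (hu : ContDiff ℝ 3 u) (x₁ x₂ : E2) (K : ℝ)
    (hK : 0 ≤ K)
    (hbound : ∀ q ∈ segment ℝ x₁ x₂, ∀ e : E2,
      |iteratedFDeriv ℝ 3 u q ![e, e, e]| ≤ K * ‖e‖ ^ 3) :
    |u x₂ - u x₁ - fderiv ℝ u (midpoint ℝ x₁ x₂) (x₂ - x₁)|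
      ≤ K / 24 * ‖x₂ - x₁‖ ^ 3 := by
  set m := midpoint ℝ x₁ x₂ with hm
  set d := x₂ - x₁ with hd
  set e : E2 := (1/2 : ℝ) • d with he
  have hmid : m = (1/2 : ℝ) • (x₁ + x₂) := by
    rw [hm, midpoint_eq_smul_add, invOf_eq_inv]; norm_num
  have hme : m + e = x₂ := by rw [hmid, he, hd]; module
  have hme' : m + -e = x₁ := by rw [hmid, he, hd]; module
  have hvec : ∀ w : E2, (fun _ : Fin 3 => w) = ![w, w, w] := by
    intro w; funext i; fin_cases i <;> rfl
  have hseg : ∀ t ∈ Icc (0:ℝ) 1, ∀ c : ℝ, |c| = 1 → m + t • (c • e) ∈ segment ℝ x₁ x₂ := by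
    intro t ht c hc
    rw [segment_eq_image']
    refine ⟨(1 + t * c)/2, ?_, ?_⟩
    · rcases abs_eq (by norm_num : (0:ℝ) ≤ 1) |>.mp hc with h | h <;>
        constructor <;> nlinarith [ht.1, ht.2]
    · rw [hmid, he]; module
  have hC : ∀ (v : E2), ‖v‖ = ‖e‖ → (∀ t ∈ Icc (0:ℝ) 1, m + t • v ∈ segment ℝ x₁ x₂) →
      ∀ t ∈ Icc (0:ℝ) 1, |G u m v 3 t| ≤ K * ‖e‖ ^ 3 := by
    intro v hv hsegv t ht
    have := hbound (m + t • v) (hsegv t ht) v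
    rw [G, hvec v, hv] at *
    exact this.trans (by rw [hv])
  have hA := one_sided hu m e (hC e rfl (fun t ht => by
    simpa using hseg t ht 1 (by norm_num)))
  have hB := one_sided hu m (-e) (hC (-e) (by simp)
    (fun t ht => by simpa using hseg t ht (-1) (by norm_num)))
  -- unfold the G values
  have hG0 : ∀ v : E2, G u m v 0 0 = u m := by intro v; simp [G]
  have hG01 : ∀ v : E2, G u m v 0 1 = u (m + v) := by intro v; simp [G]
  have hG1 : ∀ v : E2, G u m v 1 0 = fderiv ℝ u m v := by
    intro v; simp [G, iteratedFDeriv_one_apply]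
  have hG2 : G u m (-e) 2 0 = G u m e 2 0 := by
    simp only [G, zero_smul, add_zero]
    have : (fun _ : Fin 2 => -e) = fun i : Fin 2 => (-1 : ℝ) • e := by
      funext i; simp
    rw [this, ContinuousMultilinearMap.map_smul_univ]
    simp
  rw [hG01, hG0, hG1, hme] at hA
  rw [hG01, hG0, hG1, hG2, hme'] at hB
  rw [map_neg] at hB
  have hF : fderiv ℝ u m d = 2 * fderiv ℝ u m e := by
    rw [he, map_smul]; simp only [smul_eq_mul]; ring
  have hnorm : ‖e‖ = ‖d‖ / 2 := by
    rw [he, norm_smul]; simp [norm_div]; ring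
  set X := u x₂ - u m - fderiv ℝ u m e - G u m e 2 0 / 2 with hX
  set Y := u x₁ - u m - -(fderiv ℝ u m e) - G u m e 2 0 / 2 with hY
  have hXY : u x₂ - u x₁ - fderiv ℝ u m d = X - Y := by rw [hX, hY, hF]; ring
  have habs : |X - Y| ≤ |X| + |Y| := abs_sub X Y
  have hCval : K * ‖e‖ ^ 3 = K / 8 * ‖d‖ ^ 3 := by rw [hnorm]; ring
  rw [hXY]
  rw [hCval] at hA hB
  calc |X - Y| ≤ |X| + |Y| := habs
    _ ≤ K / 8 * ‖d‖ ^ 3 / 6 + K / 8 * ‖d‖ ^ 3 / 6 := add_le_add hA hB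
    _ = K / 24 * ‖d‖ ^ 3 := by ring

lemma inner_gauss (p d : E2) (w : ℝ) :
    ⟪gauss p, toR3 d w⟫ = (Real.sqrt (1 + ‖p‖ ^ 2))⁻¹ * (w - ⟪p, d⟫) := by
  simp [gauss, toR3, real_inner_smul_left, PiLp.inner_apply, Fin.sum_univ_three,
    Fin.sum_univ_two, RCLike.inner_apply, WithLp.equiv_symm_apply, PiLp.toLp_apply]
  ring

/-- the surface normal of the graph of `u` at the image of an
edge midpoint is almost orthogonal to the chord of the graph over that edge. -/
theorem stmt_7 (u : E2 → ℝ) (hu : ContDiff ℝ 3 u) (x₁ x₂ : E2) (K : ℝ)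
    (hK : 0 ≤ K)
    (hbound : ∀ q ∈ segment ℝ x₁ x₂, ∀ e : E2,
      |iteratedFDeriv ℝ 3 u q ![e, e, e]| ≤ K * ‖e‖ ^ 3) :
    |⟪gauss (gradient u (midpoint ℝ x₁ x₂)),
        toR3 (x₂ - x₁) (u x₂ - u x₁)⟫| ≤ K / 24 * ‖x₂ - x₁‖ ^ 3 := by
  set m := midpoint ℝ x₁ x₂ with hm
  set p := gradient u m with hp
  set c : ℝ := (Real.sqrt (1 + ‖p‖ ^ 2))⁻¹ with hc
  have hgrad : ⟪p, x₂ - x₁⟫ = fderiv ℝ u m (x₂ - x₁) := by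
    rw [hp, gradient, InnerProductSpace.toDual_symm_apply]
  have hin : ⟪gauss p, toR3 (x₂ - x₁) (u x₂ - u x₁)⟫
      = c * (u x₂ - u x₁ - fderiv ℝ u m (x₂ - x₁)) := by
    rw [inner_gauss, hgrad]
  have hc0 : 0 ≤ c := by rw [hc]; positivity
  have hc1 : c ≤ 1 := by
    rw [hc]
    have h1 : (1:ℝ) ≤ Real.sqrt (1 + ‖p‖ ^ 2) := by
      nth_rewrite 1 [show (1:ℝ) = Real.sqrt 1 by simp]
      exact Real.sqrt_le_sqrt (by nlinarith [sq_nonneg ‖p‖])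
    exact inv_le_one_of_one_le₀ h1
  have hkey := key_bound u hu x₁ x₂ K hK hbound
  rw [hin, abs_mul, abs_of_nonneg hc0]
  calc c * |u x₂ - u x₁ - fderiv ℝ u m (x₂ - x₁)|
      ≤ 1 * (K / 24 * ‖x₂ - x₁‖ ^ 3) :=
        mul_le_mul hc1 hkey (abs_nonneg _) (by norm_num)
    _ = K / 24 * ‖x₂ - x₁‖ ^ 3 := by ring
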